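/- Let A be a finitely generated Z-subalgebra of C, and fix a non-principal ultrafilter on the set of primes together with an isomorphism ulim_p \bar{F_p} ≅ C. Then there exists a family of ring homomorphisms γ_p : A → \bar{F_p}, defined for almost all p, such that for every x ∈ A we have x = ulim_p γ_p(x) under the fixed isomorphism. -/
import Mathlib


instance (p : Nat.Primes) : Fact (p : ℕ).Prime := ⟨p.2⟩

/-- Given a non-principal ultrafilter on the primes and a fixed identification of the
ultraproduct of the `F̄_p` with `ℂ` (encoded by a surjective ring homomorphism `φ` from
the product onto `ℂ` identifying exactly almost-everywhere-equal families), every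
finitely generated `ℤ`-subalgebra `A ⊆ ℂ` admits homomorphisms `γ_p : A → F̄_p`, defined
for almost all `p`, such that `x = ulim_p γ_p x` for all `x ∈ A`. -/
theorem exists_approximation_homs (U : Ultrafilter Nat.Primes)
    (hU : ∀ S : Set Nat.Primes, S.Finite → S ∉ U)
    (φ : (∀ p : Nat.Primes, AlgebraicClosure (ZMod p)) →+* ℂ)
    (hφs : Function.Surjective φ)
    (hφ : ∀ a b, (φ a = φ b ↔ {p | a p = b p} ∈ U))
    (A : Subalgebra ℤ ℂ) (hA : A.FG) :
    ∃ γ : ∀ p : Nat.Primes, A → AlgebraicClosure (ZMod p),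
      {p | γ p 1 = 1 ∧ (∀ x y : A, γ p (x + y) = γ p x + γ p y) ∧
          (∀ x y : A, γ p (x * y) = γ p x * γ p y)} ∈ U ∧
      ∀ x : A, φ (fun p => γ p x) = (x : ℂ) := by
  classical
  have hft : Algebra.FiniteType ℤ A := (Subalgebra.fg_iff_finiteType A).mp hA
  obtain ⟨n, f, hf⟩ := Algebra.FiniteType.iff_quotient_mvPolynomial''.mp hft
  -- preimage section for f
  set q : A → MvPolynomial (Fin n) ℤ := fun x => (hf x).choose with hq
  have hqf : ∀ x : A, f (q x) = x := fun x => (hf x).choose_spec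
  -- images of the variables in ℂ
  set a : Fin n → ℂ := fun i => (f (MvPolynomial.X i) : ℂ) with ha
  -- lifts of the variables in the product
  set b : Fin n → (∀ p : Nat.Primes, AlgebraicClosure (ZMod p)) :=
    fun i => (hφs (a i)).choose with hb
  have hbφ : ∀ i, φ (b i) = a i := fun i => (hφs (a i)).choose_spec
  -- the kernel is finitely generated
  have hker : (RingHom.ker (f : MvPolynomial (Fin n) ℤ →+* A)).FG :=
    IsNoetherian.noetherian _
  obtain ⟨G, hG⟩ := hker
  -- key computation: φ of the pointwise evaluation is evaluation in ℂ
  have key : ∀ P : MvPolynomial (Fin n) ℤ,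
      φ (fun p => MvPolynomial.aeval (fun i => b i p) P) = (f P : ℂ) := by
    intro P
    have h1 : (fun p => MvPolynomial.aeval (fun i => b i p) P)
        = MvPolynomial.aeval b P := by
      funext p
      exact (MvPolynomial.comp_aeval_apply b (Pi.evalAlgHom ℤ _ p) P).symm
    rw [h1]
    have h2 : φ (MvPolynomial.aeval b P)
        = MvPolynomial.aeval (fun i => φ (b i)) P :=
      MvPolynomial.comp_aeval_apply b φ.toIntAlgHom P
    rw [h2]
    have h3 : (A.val.comp f : MvPolynomial (Fin n) ℤ →ₐ[ℤ] ℂ)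
        = MvPolynomial.aeval a := by
      apply MvPolynomial.algHom_ext
      intro i
      simp [ha]
    have h4 : (fun i => φ (b i)) = a := funext hbφ
    rw [h4, ← h3]
    rfl
  -- the good set of primes
  set S : Set Nat.Primes :=
    {p | ∀ g ∈ G, MvPolynomial.aeval (fun i => b i p) g = 0} with hS
  have hSU : S ∈ U := by
    have : ∀ g ∈ G, {p | MvPolynomial.aeval (fun i => b i p) g = (0 : _)} ∈ U := by
      intro g hg
      have hg0 : (f g : ℂ) = 0 := by
        have : g ∈ RingHom.ker (f : MvPolynomial (Fin n) ℤ →+* A) := by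
          rw [← hG]; exact Ideal.subset_span hg
        rw [RingHom.mem_ker] at this
        have h0 : f g = 0 := this
        rw [h0]; simp
      have := (hφ (fun p => MvPolynomial.aeval (fun i => b i p) g) 0).mp (by
        rw [key g, map_zero, hg0])
      simpa using this
    have : (⋂ g ∈ G, {p | MvPolynomial.aeval (fun i => b i p) g = (0 : _)}) ∈ U :=
      (Filter.biInter_finset_mem G).mpr this
    refine Filter.mem_of_superset this ?_
    intro p hp
    simp only [Set.mem_iInter] at hp
    exact hp
  -- define γ
  refine ⟨fun p x => MvPolynomial.aeval (fun i => b i p) (q x), ?_, ?_⟩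
  · refine Filter.mem_of_superset hSU ?_
    intro p hp
    have hker' : ∀ P : MvPolynomial (Fin n) ℤ, f P = 0 →
        MvPolynomial.aeval (fun i => b i p) P = 0 := by
      intro P hP
      have hPk : P ∈ Ideal.span (G : Set (MvPolynomial (Fin n) ℤ)) := by
        rw [hG, RingHom.mem_ker]; exact hP
      have : Ideal.span (G : Set (MvPolynomial (Fin n) ℤ)) ≤
          RingHom.ker ((MvPolynomial.aeval (fun i => b i p)).toRingHom) := by
        rw [Ideal.span_le]
        intro g hg
        exact hp g hg
      exact this hPk
    have key2 : ∀ P Q : MvPolynomial (Fin n) ℤ, f P = f Q →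
        MvPolynomial.aeval (fun i => b i p) P = MvPolynomial.aeval (fun i => b i p) Q := by
      intro P Q h
      have : MvPolynomial.aeval (fun i => b i p) (P - Q) = 0 :=
        hker' _ (by rw [map_sub, h, sub_self])
      rw [map_sub, sub_eq_zero] at this
      exact this
    refine ⟨?_, ?_, ?_⟩
    · have := key2 (q 1) 1 (by rw [hqf, map_one])
      simpa using this
    · intro x y
      have := key2 (q (x + y)) (q x + q y) (by rw [hqf, map_add, hqf, hqf])
      simpa using this
    · intro x y
      have := key2 (q (x * y)) (q x * q y) (by rw [hqf, map_mul, hqf, hqf])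
      simpa using this
  · intro x
    rw [key (q x), hqf]
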